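/- Let F : ℝ^d → ℝ be a differentiable convex inf-compact function, let c_1, ..., c_n : ℝ^d → ℝ be differentiable convex functions with nonempty feasible set C = {z : c_i(z) ≤ 0 for all i}, let Ψ(z) = Σ_{i=1}^n g(c_i(z)), and let r_t > 0 with r_t → ∞. Let F* = min_{z ∈ C} F(z) and F_t* = min_{z ∈ ℝ^d} [F(z) + r_t Ψ(z)]. Then lim_{t→∞} F_t* = F*. -/

import Mathlib

/-- The penalty kernel `g(u) = log((e^u + e^{-u})/2)` for `u > 0`, `g(u) = 0` for `u ≤ 0`. -/
noncomputable def penaltyKernel (u : ℝ) : ℝ :=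
  if 0 < u then Real.log ((Real.exp u + Real.exp (-u)) / 2) else 0

lemma two_lt_cosh {u : ℝ} (hu : 0 < u) : 1 < (Real.exp u + Real.exp (-u)) / 2 := by
  have h1 : Real.exp u * Real.exp (-u) = 1 := by
    rw [← Real.exp_add]; simp
  have h2 : 1 < Real.exp u := by
    simpa using Real.exp_lt_exp.mpr hu
  nlinarith [Real.exp_pos (-u)]

lemma penaltyKernel_nonneg (u : ℝ) : 0 ≤ penaltyKernel u := by
  unfold penaltyKernel
  split_ifs with h
  · exact le_of_lt (Real.log_pos (two_lt_cosh h))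
  · exact le_refl _
    
lemma penaltyKernel_pos {u : ℝ} (hu : 0 < u) : 0 < penaltyKernel u := by
  unfold penaltyKernel
  rw [if_pos hu]
  exact Real.log_pos (two_lt_cosh hu)

lemma penaltyKernel_of_nonpos {u : ℝ} (hu : u ≤ 0) : penaltyKernel u = 0 := by
  unfold penaltyKernel
  rw [if_neg (not_lt.mpr hu)]

lemma penaltyKernel_continuous : Continuous penaltyKernel := by
  have hL : Continuous fun u : ℝ => Real.log ((Real.exp u + Real.exp (-u)) / 2) := by
    apply Continuous.log
    · continuity
    · intro x
      positivity
  have : penaltyKernel = fun u : ℝ =>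
      if u ≤ 0 then (fun _ : ℝ => (0:ℝ)) u else Real.log ((Real.exp u + Real.exp (-u)) / 2) := by
    funext u
    unfold penaltyKernel
    rcases le_or_gt u 0 with h | h
    · rw [if_neg (not_lt.mpr h), if_pos h]
    · rw [if_pos h, if_neg (not_le.mpr h)]
  rw [this]
  exact Continuous.if_le continuous_const hL continuous_id continuous_const
    (fun x hx => by simp [hx])

theorem penalized_optimal_values_converge
    (d n : ℕ) (hd : 1 ≤ d) (hn : 1 ≤ n)
    (F : EuclideanSpace ℝ (Fin d) → ℝ)
    (hFdiff : Differentiable ℝ F) (hFconv : ConvexOn ℝ Set.univ F)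
    (hFinf : ∀ A : ℝ, IsCompact {z : EuclideanSpace ℝ (Fin d) | F z ≤ A})
    (c : Fin n → EuclideanSpace ℝ (Fin d) → ℝ)
    (hcdiff : ∀ i, Differentiable ℝ (c i)) (hcconv : ∀ i, ConvexOn ℝ Set.univ (c i))
    (hfeas : ∃ z : EuclideanSpace ℝ (Fin d), ∀ i, c i z ≤ 0)
    (r : ℕ → ℝ) (hr : ∀ t, 0 < r t) (hrinf : Filter.Tendsto r Filter.atTop Filter.atTop) :
    Filter.Tendsto
      (fun t : ℕ => sInf (Set.range
        (fun z : EuclideanSpace ℝ (Fin d) => F z + r t * (∑ i, penaltyKernel (c i z)))))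
      Filter.atTop
      (nhds (sInf (F '' {z : EuclideanSpace ℝ (Fin d) | ∀ i, c i z ≤ 0}))) := by
  classical
  set ψ : EuclideanSpace ℝ (Fin d) → ℝ := fun z => ∑ i, penaltyKernel (c i z) with hψ
  have hψcont : Continuous ψ :=
    continuous_finset_sum _ fun i _ => penaltyKernel_continuous.comp (hcdiff i).continuous
  have hψnonneg : ∀ z, 0 ≤ ψ z := fun z =>
    Finset.sum_nonneg fun i _ => penaltyKernel_nonneg _
  have hFcont : Continuous F := hFdiff.continuous
  set C : Set (EuclideanSpace ℝ (Fin d)) := {z | ∀ i, c i z ≤ 0} with hC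
  obtain ⟨z0, hz0⟩ := hfeas
  have hz0C : z0 ∈ C := hz0
  have hCclosed : IsClosed C := by
    have : C = ⋂ i, {z | c i z ≤ 0} := by
      ext z; simp [hC]
    rw [this]
    exact isClosed_iInter fun i => isClosed_le (hcdiff i).continuous continuous_const
  -- global minimum of F
  obtain ⟨zm, hzmK, hzm⟩ := (hFinf (F z0)).exists_isMinOn ⟨z0, show F z0 ≤ F z0 from le_refl _⟩
    (hFcont.continuousOn)
  set m := F zm with hm
  have hmglob : ∀ z, m ≤ F z := by
    intro z
    rcases le_or_gt (F z) (F z0) with h | h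
    · exact hzm h
    · exact le_trans (hzm (le_refl (F z0) : z0 ∈ {z | F z ≤ F z0})) h.le
  -- minimum of F on C
  have hK1 : IsCompact (C ∩ {z | F z ≤ F z0}) := (hFinf (F z0)).inter_left hCclosed
  obtain ⟨zs, hzsK, hzs⟩ := hK1.exists_isMinOn ⟨z0, hz0C, show F z0 ≤ F z0 from le_refl _⟩ hFcont.continuousOn
  have hzsC : zs ∈ C := hzsK.1
  set Fstar := F zs with hFstar
  have hzsmin : ∀ z ∈ C, Fstar ≤ F z := by
    intro z hzC
    rcases le_or_gt (F z) (F z0) with h | h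
    · exact hzs ⟨hzC, h⟩
    · exact le_trans (hzs ⟨hz0C, show F z0 ≤ F z0 from le_refl _⟩) h.le
  have hsInfC : sInf (F '' C) = Fstar := by
    apply IsLeast.csInf_eq
    constructor
    · exact ⟨zs, hzsC, rfl⟩
    · rintro b ⟨z, hzC, rfl⟩
      exact hzsmin z hzC
  have hψzs : ψ zs = 0 :=
    Finset.sum_eq_zero fun i _ => penaltyKernel_of_nonpos (hzsC i)
  set φ : ℕ → ℝ := fun t => sInf (Set.range
    (fun z : EuclideanSpace ℝ (Fin d) => F z + r t * ψ z)) with hφ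
  have hbdd : ∀ t, BddBelow (Set.range
      (fun z : EuclideanSpace ℝ (Fin d) => F z + r t * ψ z)) := by
    intro t
    refine ⟨m, ?_⟩
    rintro b ⟨z, rfl⟩
    have : 0 ≤ r t * ψ z := mul_nonneg (hr t).le (hψnonneg z)
    have := hmglob z
    dsimp only
    linarith
  have hupper : ∀ t, φ t ≤ Fstar := by
    intro t
    have : Fstar ∈ Set.range (fun z : EuclideanSpace ℝ (Fin d) => F z + r t * ψ z) := by
      refine ⟨zs, ?_⟩
      simp [hψzs, hFstar]
    exact csInf_le (hbdd t) this
  have hlower : ∀ ε > (0:ℝ), ∀ᶠ t in Filter.atTop, Fstar - ε ≤ φ t := by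
    intro ε hε
    by_cases hK : ({z : EuclideanSpace ℝ (Fin d) | F z ≤ Fstar - ε}).Nonempty
    · obtain ⟨w, hwK, hw⟩ := (hFinf (Fstar - ε)).exists_isMinOn hK hψcont.continuousOn
      set δ := ψ w with hδ
      have hwnotC : w ∉ C := by
        intro hwc
        have := hzsmin w hwc
        have : F w ≤ Fstar - ε := hwK
        linarith [hzsmin w hwc]
      have hδpos : 0 < δ := by
        rcases lt_or_ge 0 δ with h | h
        · exact h
        · exfalso
          apply hwnotC
          intro i
          by_contra hci
          push_neg at hci
          have h1 : 0 < penaltyKernel (c i w) := penaltyKernel_pos hci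
          have h2 : penaltyKernel (c i w) ≤ ψ w :=
            Finset.single_le_sum (fun j _ => penaltyKernel_nonneg (c j w)) (Finset.mem_univ i)
          linarith
      filter_upwards [hrinf.eventually_ge_atTop ((Fstar - ε - m) / δ)] with t ht
      apply le_csInf (Set.range_nonempty _)
      rintro b ⟨z, rfl⟩
      dsimp only
      by_cases hz : F z ≤ Fstar - ε
      · have hδz : δ ≤ ψ z := hw hz
        have h1 : Fstar - ε - m ≤ r t * δ := by
          rwa [div_le_iff₀ hδpos] at ht
        have h2 : r t * δ ≤ r t * ψ z := mul_le_mul_of_nonneg_left hδz (hr t).le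
        have := hmglob z
        linarith
      · push_neg at hz
        have : 0 ≤ r t * ψ z := mul_nonneg (hr t).le (hψnonneg z)
        linarith
    · filter_upwards with t
      apply le_csInf (Set.range_nonempty _)
      rintro b ⟨z, rfl⟩
      have hz : ¬ F z ≤ Fstar - ε := fun h => hK ⟨z, h⟩
      push_neg at hz
      have : 0 ≤ r t * ψ z := mul_nonneg (hr t).le (hψnonneg z)
      dsimp only
      linarith
  rw [hsInfC]
  rw [Metric.tendsto_atTop]
  intro ε hε
  obtain ⟨N, hN⟩ := (Filter.eventually_atTop.mp (hlower (ε/2) (by linarith)))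
  refine ⟨N, fun t ht => ?_⟩
  have h1 := hupper t
  have h2 := hN t ht
  rw [Real.dist_eq, abs_sub_lt_iff]
  constructor <;> linarith
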